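/- arXiv:2307.14496 — 2 statements merged into one kernel-verified Lean document; each statement's English description precedes it below -/
import Mathlib

section
/- Let $G=(V,E)$ be a finite graph, $P:V\to\mathbb{R}^\ell$ a vector representation of $G$ (i.e., $P(u)\cdot P(v)\ge1$ if $\{u,v\}\in E$ and $P(u)\cdot P(v)\ge0$ otherwise), and $f:V\to\mathbb{R}_{\ge0}$. Let $\mathcal{L}^f(G)$ be the symmetric weighted Laplacian with diagonal entries $\sum_{u'\in N_G(u)}f(u')$ and off-diagonal entries $-\sqrt{f(u)f(v)}$ on edges. Let $T$ be the diagonal matrix with $T_{u,u}=P(u)\cdot\sum_{v\in V}f(v)P(v)$. Then for all $1\le i\le|V|$, the $i$-th largest eigenvalue of $T$ is at least the $i$-th largest eigenvalue of $\mathcal{L}^f(G)$. -/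
open Matrix Polynomial

/-- The symmetric vertex-weighted Laplacian `𝓛^f(G)`. -/
noncomputable def SimpleGraph.symWLap {V : Type*} [Fintype V] [DecidableEq V]
    (G : SimpleGraph V) [DecidableRel G.Adj] (w : V → ℝ) : Matrix V V ℝ :=
  Matrix.of fun u v =>
    if u = v then ∑ u' ∈ G.neighborFinset u, w u'
    else if G.Adj u v then -Real.sqrt (w u * w v) else 0

section Aux
open Finset Module

lemma charpoly_conj_unitary {n : ℕ} (A : Matrix (Fin n) (Fin n) ℝ)
    (U : Matrix.unitaryGroup (Fin n) ℝ) :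
    ((U : Matrix (Fin n) (Fin n) ℝ) * A * (star U : Matrix (Fin n) (Fin n) ℝ)).charpoly
      = A.charpoly := by
  have hUV : (U : Matrix (Fin n) (Fin n) ℝ) * (star U : Matrix (Fin n) (Fin n) ℝ) = 1 :=
    Matrix.mem_unitaryGroup_iff.mp U.2
  have hVU : (star U : Matrix (Fin n) (Fin n) ℝ) * (U : Matrix (Fin n) (Fin n) ℝ) = 1 :=
    Matrix.mem_unitaryGroup_iff'.mp U.2
  set V := (U : Matrix (Fin n) (Fin n) ℝ).map (C : ℝ →+* ℝ[X]) with hV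
  set W := (star U : Matrix (Fin n) (Fin n) ℝ).map (C : ℝ →+* ℝ[X]) with hW
  have hVW : V * W = 1 := by
    rw [hV, hW, ← Matrix.map_mul, hUV, Matrix.map_one _ (map_zero _) (map_one _)]
  have hWV : W * V = 1 := by
    rw [hV, hW, ← Matrix.map_mul, hVU, Matrix.map_one _ (map_zero _) (map_one _)]
  have key : charmatrix ((U : Matrix (Fin n) (Fin n) ℝ) * A * (star U : Matrix (Fin n) (Fin n) ℝ))
      = V * charmatrix A * W := by
    unfold charmatrix
    rw [Matrix.mul_sub, Matrix.sub_mul]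
    congr 1
    · have : V * Matrix.scalar (Fin n) (X : ℝ[X]) = Matrix.scalar (Fin n) (X : ℝ[X]) * V :=
        (Matrix.scalar_commute (X : ℝ[X]) (fun r => Commute.all _ _) V).symm
      rw [this, Matrix.mul_assoc, hVW, Matrix.mul_one]
    · simp only [RingHom.mapMatrix_apply, hV, hW, ← Matrix.map_mul]
  rw [Matrix.charpoly, Matrix.charpoly, key, Matrix.det_mul, Matrix.det_mul, mul_comm,
    ← mul_assoc, ← Matrix.det_mul, hWV, Matrix.det_one, one_mul]

lemma charpoly_eq_prod_eigenvalues {n : ℕ} (A : Matrix (Fin n) (Fin n) ℝ)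
    (hA : A.IsHermitian) :
    A.charpoly = ∏ i, (X - C (hA.eigenvalues i)) := by
  have hsp := hA.spectral_theorem
  have hof : (RCLike.ofReal ∘ hA.eigenvalues : Fin n → ℝ) = hA.eigenvalues := by
    funext i; simp
  rw [hof] at hsp
  calc A.charpoly
      = ((hA.eigenvectorUnitary : Matrix (Fin n) (Fin n) ℝ)
          * Matrix.diagonal hA.eigenvalues
          * (star hA.eigenvectorUnitary : Matrix (Fin n) (Fin n) ℝ)).charpoly := by exact congrArg Matrix.charpoly hsp
    _ = (Matrix.diagonal hA.eigenvalues).charpoly := charpoly_conj_unitary _ _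
    _ = ∏ i, (X - C (hA.eigenvalues i)) := by
        rw [Matrix.charpoly_of_upperTriangular _ (Matrix.blockTriangular_diagonal _)]
        simp

lemma prod_X_sub_C_roots {n : ℕ} (a : Fin n → ℝ) :
    (∏ i, (X - C (a i))).roots = Multiset.map a Finset.univ.val := by
  have : (∏ i, (X - C (a i)))
      = ((Multiset.map a Finset.univ.val).map fun r => X - C r).prod := by
    rw [Multiset.map_map]
    rfl
  rw [this, Polynomial.roots_multiset_prod_X_sub_C]

lemma multiset_eq_of_prod_eq {n : ℕ} (a b : Fin n → ℝ)
    (h : (∏ i, (X - C (a i))) = ∏ i, (X - C (b i))) :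
    Multiset.map a Finset.univ.val = Multiset.map b Finset.univ.val := by
  rw [← prod_X_sub_C_roots a, ← prod_X_sub_C_roots b, h]

lemma card_filter_eq_of_multiset_eq {n : ℕ} (a b : Fin n → ℝ)
    (h : Multiset.map a Finset.univ.val = Multiset.map b Finset.univ.val)
    (p : ℝ → Prop) [DecidablePred p] :
    (univ.filter fun j => p (a j)).card = (univ.filter fun j => p (b j)).card := by
  have := congrArg (Multiset.countP p) h
  rw [Multiset.countP_map, Multiset.countP_map] at this
  exact this

lemma antitone_card_ge {n : ℕ} (μ : Fin n → ℝ) (hμ : Antitone μ) (i : Fin n) :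
    (i : ℕ) + 1 ≤ (univ.filter fun j => μ i ≤ μ j).card := by
  have hsub : Finset.Iic i ⊆ univ.filter fun j => μ i ≤ μ j := by
    intro j hj
    simp only [Finset.mem_filter, Finset.mem_univ, true_and]
    exact hμ (Finset.mem_Iic.mp hj)
  calc (i : ℕ) + 1 = (Finset.Iic i).card := by rw [Fin.card_Iic]
    _ ≤ _ := Finset.card_le_card hsub

lemma antitone_card_lt {n : ℕ} (μ : Fin n → ℝ) (hμ : Antitone μ) (i : Fin n) :
    (univ.filter fun j => μ i < μ j).card ≤ (i : ℕ) := by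
  have hsub : (univ.filter fun j => μ i < μ j) ⊆ Finset.Iio i := by
    intro j hj
    simp only [Finset.mem_filter] at hj
    rw [Finset.mem_Iio]
    by_contra hij
    exact absurd (hμ (le_of_not_gt hij)) (not_le.mpr hj.2)
  calc _ ≤ (Finset.Iio i).card := Finset.card_le_card hsub
    _ = (i : ℕ) := Fin.card_Iio i

lemma dot_sum_sum {n : ℕ} (s : Finset (Fin n)) (c d : Fin n → ℝ) (v w : Fin n → (Fin n → ℝ)) :
    (∑ k ∈ s, c k • v k) ⬝ᵥ (∑ k ∈ s, d k • w k)
      = ∑ k ∈ s, ∑ j ∈ s, c k * d j * (v k ⬝ᵥ w j) := by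
  simp only [dotProduct, Finset.sum_apply, Pi.smul_apply, smul_eq_mul,
    Finset.sum_mul_sum]
  rw [Finset.sum_comm]
  refine Finset.sum_congr rfl fun k _ => ?_
  rw [Finset.sum_comm]
  refine Finset.sum_congr rfl fun j _ => ?_
  rw [Finset.mul_sum]
  exact Finset.sum_congr rfl fun u _ => by ring

lemma span_repr {n : ℕ} (A : Matrix (Fin n) (Fin n) ℝ) (hA : A.IsHermitian)
    (s : Finset (Fin n)) (x : EuclideanSpace ℝ (Fin n))
    (hx : x ∈ Submodule.span ℝ ((⇑(hA.eigenvectorBasis)) '' ↑s)) :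
    ∃ d : Fin n → ℝ,
      ((x : Fin n → ℝ) ⬝ᵥ (x : Fin n → ℝ) = ∑ k ∈ s, (d k)^2) ∧
      ((x : Fin n → ℝ) ⬝ᵥ (A *ᵥ (x : Fin n → ℝ)) = ∑ k ∈ s, hA.eigenvalues k * (d k)^2) := by
  classical
  set v : Fin n → EuclideanSpace ℝ (Fin n) := ⇑(hA.eigenvectorBasis) with hv
  have hvinj : Function.Injective v :=
    hA.eigenvectorBasis.orthonormal.linearIndependent.injective
  have himg : (v '' ↑s) = ↑(s.image v) := by simp [Finset.coe_image]
  rw [himg] at hx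
  obtain ⟨g, -, hg⟩ := Submodule.mem_span_finset.mp hx
  set d : Fin n → ℝ := fun k => g (v k) with hd
  have hxsum : x = ∑ k ∈ s, d k • v k := by
    rw [← hg, Finset.sum_image (fun a _ b _ h => hvinj h)]
  have hortho : ∀ j k, (v j : Fin n → ℝ) ⬝ᵥ (v k : Fin n → ℝ) = if j = k then 1 else 0 := by
    intro j k
    have h := (orthonormal_iff_ite (𝕜 := ℝ)).mp hA.eigenvectorBasis.orthonormal j k
    rw [← h]
    simp [dotProduct, PiLp.inner_apply, RCLike.inner_apply, mul_comm]
    rfl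
  have hxfun : (x : Fin n → ℝ) = ∑ k ∈ s, d k • (fun u => v k u) := by
    rw [hxsum, WithLp.ofLp_sum]
    simp only [WithLp.ofLp_smul]
  refine ⟨d, ?_, ?_⟩
  · rw [hxfun, dot_sum_sum]
    simp only [hortho, mul_ite, mul_one, mul_zero]
    simp [Finset.sum_ite_eq', pow_two, mul_assoc]
  · have hAx : A *ᵥ (x : Fin n → ℝ)
        = ∑ k ∈ s, (d k * hA.eigenvalues k) • (fun u => v k u) := by
      rw [hxfun]
      rw [show A *ᵥ (∑ k ∈ s, d k • (fun u => v k u))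
          = ∑ k ∈ s, d k • (A *ᵥ (fun u => v k u)) by
        rw [← Matrix.mulVecLin_apply, map_sum]
        exact Finset.sum_congr rfl fun k _ => by
          rw [LinearMap.map_smul, Matrix.mulVecLin_apply]]
      refine Finset.sum_congr rfl fun k _ => ?_
      have := hA.mulVec_eigenvectorBasis k
      rw [show (fun u => v k u) = ⇑(hA.eigenvectorBasis k) from rfl, this, smul_smul]
    rw [hAx, hxfun, dot_sum_sum]
    simp only [hortho, mul_ite, mul_one, mul_zero]
    simp [Finset.sum_ite_eq', pow_two]
    exact Finset.sum_congr rfl fun k _ => by ring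

lemma finrank_span_onb_image {n : ℕ} (b : OrthonormalBasis (Fin n) ℝ (EuclideanSpace ℝ (Fin n)))
    (s : Finset (Fin n)) :
    finrank ℝ (Submodule.span ℝ ((⇑b) '' ↑s)) = s.card := by
  have hli : LinearIndependent ℝ (fun k : {x // x ∈ s} => b k) :=
    b.orthonormal.linearIndependent.comp _ Subtype.val_injective
  have hr : Set.range (fun k : {x // x ∈ s} => b k) = (⇑b) '' ↑s := by
    ext y; simp
  rw [← hr, finrank_span_eq_card hli]
  simp

lemma eig_mono {n : ℕ} {A B : Matrix (Fin n) (Fin n) ℝ}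
    (hA : A.IsHermitian) (hB : B.IsHermitian)
    (hq : ∀ x : Fin n → ℝ, x ⬝ᵥ (A *ᵥ x) ≤ x ⬝ᵥ (B *ᵥ x))
    (μ ν : Fin n → ℝ) (hμ : Antitone μ) (hν : Antitone ν)
    (hmB : Multiset.map μ Finset.univ.val = Multiset.map hB.eigenvalues Finset.univ.val)
    (hmA : Multiset.map ν Finset.univ.val = Multiset.map hA.eigenvalues Finset.univ.val) :
    ∀ i, ν i ≤ μ i := by
  classical
  intro i
  set eA := hA.eigenvalues with heA
  set eB := hB.eigenvalues with heB
  set sA : Finset (Fin n) := univ.filter (fun k => ν i ≤ eA k) with hsA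
  set sB : Finset (Fin n) := univ.filter (fun k => ¬ μ i < eB k) with hsB
  have hcardA : (i : ℕ) + 1 ≤ sA.card := by
    rw [hsA, ← card_filter_eq_of_multiset_eq ν eA hmA (fun r => ν i ≤ r)]
    exact antitone_card_ge ν hν i
  have hcardB : n - (i : ℕ) ≤ sB.card := by
    have h1 : (univ.filter fun k => μ i < eB k).card ≤ (i : ℕ) := by
      rw [← card_filter_eq_of_multiset_eq μ eB hmB (fun r => μ i < r)]
      exact antitone_card_lt μ hμ i
    have h2 : sB = univ \ (univ.filter fun k => μ i < eB k) := by
      rw [hsB, Finset.filter_not]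
    rw [h2, Finset.card_sdiff_of_subset (Finset.filter_subset _ _), Finset.card_univ, Fintype.card_fin]
    omega
  set U := Submodule.span ℝ ((⇑(hA.eigenvectorBasis)) '' ↑sA) with hU
  set W := Submodule.span ℝ ((⇑(hB.eigenvectorBasis)) '' ↑sB) with hW
  have hdimU : finrank ℝ U = sA.card := finrank_span_onb_image _ _
  have hdimW : finrank ℝ W = sB.card := finrank_span_onb_image _ _
  have hinf : U ⊓ W ≠ ⊥ := by
    intro hbot
    have := Submodule.finrank_sup_add_finrank_inf_eq U W
    rw [hbot, finrank_bot] at this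
    have hle : finrank ℝ ↥(U ⊔ W) ≤ n :=
      le_trans (Submodule.finrank_le _) (by simp [finrank_euclideanSpace])
    have hin : i < n := i.isLt
    omega
  obtain ⟨x, hxUW, hxne⟩ := Submodule.exists_mem_ne_zero_of_ne_bot hinf
  obtain ⟨hxU, hxW⟩ := Submodule.mem_inf.mp hxUW
  obtain ⟨dA, hdA1, hdA2⟩ := span_repr A hA sA x hxU
  obtain ⟨dB, hdB1, hdB2⟩ := span_repr B hB sB x hxW
  have hxx : (0:ℝ) < (x : Fin n → ℝ) ⬝ᵥ (x : Fin n → ℝ) := by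
    have hx0 : ∃ u, (x : Fin n → ℝ) u ≠ 0 := by
      by_contra hc
      push_neg at hc
      exact hxne (by ext u; exact hc u)
    obtain ⟨u, hu⟩ := hx0
    have : (x : Fin n → ℝ) ⬝ᵥ (x : Fin n → ℝ) = ∑ v, ((x : Fin n → ℝ) v)^2 := by
      simp [dotProduct, pow_two]
    rw [this]
    exact Finset.sum_pos' (fun v _ => sq_nonneg _) ⟨u, Finset.mem_univ u, by positivity⟩
  have key1 : ν i * ((x : Fin n → ℝ) ⬝ᵥ (x : Fin n → ℝ)) ≤ (x : Fin n → ℝ) ⬝ᵥ (A *ᵥ x) := by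
    rw [hdA1, hdA2, Finset.mul_sum]
    refine Finset.sum_le_sum fun k hk => ?_
    have hk' : ν i ≤ eA k := (Finset.mem_filter.mp hk).2
    exact mul_le_mul_of_nonneg_right hk' (sq_nonneg _)
  have key2 : (x : Fin n → ℝ) ⬝ᵥ (B *ᵥ x) ≤ μ i * ((x : Fin n → ℝ) ⬝ᵥ (x : Fin n → ℝ)) := by
    rw [hdB1, hdB2, Finset.mul_sum]
    refine Finset.sum_le_sum fun k hk => ?_
    have hk' : eB k ≤ μ i := le_of_not_gt (Finset.mem_filter.mp hk).2
    exact mul_le_mul_of_nonneg_right hk' (sq_nonneg _)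
  have := le_trans key1 (le_trans (hq x) key2)
  exact le_of_mul_le_mul_right (by linarith) hxx

lemma symmetrize_sum {n : ℕ} (g : Fin n → Fin n → ℝ) :
    ∑ u, ∑ v, g u v = ∑ u, ∑ v, (g u v + g v u)/2 := by
  have h : ∑ u, ∑ v, g u v = ∑ u, ∑ v, g v u := Finset.sum_comm
  have h2 : (∑ u, ∑ v, g u v) = ((∑ u, ∑ v, g u v) + (∑ u, ∑ v, g v u))/2 := by
    rw [← h]; ring
  rw [h2, ← Finset.sum_add_distrib, Finset.sum_div]
  refine Finset.sum_congr rfl fun u _ => ?_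
  rw [← Finset.sum_add_distrib, Finset.sum_div]

lemma quad_ineq {n ℓ : ℕ} (G : SimpleGraph (Fin n)) [DecidableRel G.Adj]
    (P : Fin n → EuclideanSpace ℝ (Fin ℓ))
    (hP1 : ∀ u v, G.Adj u v → (1:ℝ) ≤ (inner ℝ (P u) (P v) : ℝ))
    (hP0 : ∀ u v, ¬ G.Adj u v → (0 : ℝ) ≤ (inner ℝ (P u) (P v) : ℝ))
    (f : Fin n → ℝ) (hf : ∀ v, 0 ≤ f v) (x : Fin n → ℝ) :
    x ⬝ᵥ (G.symWLap f *ᵥ x)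
      ≤ x ⬝ᵥ ((Matrix.diagonal fun u => (inner ℝ (P u) (∑ v : Fin n, f v • P v) : ℝ)) *ᵥ x) := by
  classical
  set p : Fin n → Fin n → ℝ := fun u v => (inner ℝ (P u) (P v) : ℝ) with hp
  set a : Fin n → ℝ := fun u => Real.sqrt (f u) * x u with ha
  set r : Fin n → Fin n → ℝ := fun u v => f v * p u v * x u ^ 2 with hr
  set g : Fin n → Fin n → ℝ := fun u v => a u * a v * p u v with hg
  set t : Fin n → Fin n → ℝ := fun u v =>
    if G.Adj u v then f v * x u ^ 2 - Real.sqrt (f u * f v) * (x u * x v) else 0 with ht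
  -- RHS expansion
  have hd : ∀ u, (inner ℝ (P u) (∑ v : Fin n, f v • P v) : ℝ) = ∑ v, f v * p u v := by
    intro u
    rw [inner_sum]
    exact Finset.sum_congr rfl fun v _ => real_inner_smul_right _ _ _
  have hRHS : x ⬝ᵥ ((Matrix.diagonal fun u => (inner ℝ (P u) (∑ v : Fin n, f v • P v) : ℝ)) *ᵥ x)
      = ∑ u, ∑ v, r u v := by
    simp only [dotProduct, Matrix.mulVec_diagonal, hd]
    refine Finset.sum_congr rfl fun u _ => ?_
    rw [Finset.sum_mul, Finset.mul_sum]
    exact Finset.sum_congr rfl fun v _ => by simp only [hr]; ring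
  -- LHS expansion
  have hLHS : x ⬝ᵥ (G.symWLap f *ᵥ x) = ∑ u, ∑ v, t u v := by
    have expand : x ⬝ᵥ (G.symWLap f *ᵥ x) = ∑ u, ∑ v, x u * (G.symWLap f u v * x v) := by
      simp only [dotProduct, Matrix.mulVec, dotProduct, Finset.mul_sum]
    rw [expand]
    refine Finset.sum_congr rfl fun u _ => ?_
    have hdiag : x u * (G.symWLap f u u * x u)
        = ∑ v, (if G.Adj u v then f v * x u ^ 2 else 0) := by
      simp only [SimpleGraph.symWLap, Matrix.of_apply, if_pos rfl, if_true]
      rw [SimpleGraph.neighborFinset_eq_filter, Finset.sum_filter, Finset.sum_mul,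
        Finset.mul_sum]
      refine Finset.sum_congr rfl fun v _ => by by_cases h : G.Adj u v <;> simp [h] <;> ring
    calc ∑ v, x u * (G.symWLap f u v * x v)
        = ∑ v, ((if v = u then x u * (G.symWLap f u u * x u) else 0)
            + (if G.Adj u v then -(Real.sqrt (f u * f v) * (x u * x v)) else 0)) := by
          refine Finset.sum_congr rfl fun v _ => ?_
          by_cases hvu : v = u
          · subst hvu
            simp [SimpleGraph.symWLap]
          · have huv : u ≠ v := fun h => hvu h.symm
            by_cases hadj : G.Adj u v
            · simp only [SimpleGraph.symWLap, Matrix.of_apply, if_neg huv, if_pos hadj,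
                if_neg hvu, zero_add]
              ring
            · simp [SimpleGraph.symWLap, huv, hadj, hvu]
      _ = x u * (G.symWLap f u u * x u)
            + ∑ v, (if G.Adj u v then -(Real.sqrt (f u * f v) * (x u * x v)) else 0) := by
          rw [Finset.sum_add_distrib, Finset.sum_ite_eq' Finset.univ u
            (fun _ => x u * (G.symWLap f u u * x u)), if_pos (Finset.mem_univ u)]
      _ = ∑ v, t u v := by
          rw [hdiag, ← Finset.sum_add_distrib]
          refine Finset.sum_congr rfl fun v _ => ?_
          by_cases hadj : G.Adj u v <;> simp only [ht, hadj, if_pos, if_neg, if_true,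
            if_false, add_zero] <;> ring
  -- Gram term
  have hGram : 0 ≤ ∑ u, ∑ v, g u v := by
    have hz : (inner ℝ (∑ u : Fin n, a u • P u) (∑ u : Fin n, a u • P u) : ℝ)
        = ∑ u, ∑ v, g u v := by
      rw [sum_inner]
      refine Finset.sum_congr rfl fun u _ => ?_
      rw [real_inner_smul_left, inner_sum, Finset.mul_sum]
      refine Finset.sum_congr rfl fun v _ => ?_
      rw [real_inner_smul_right]
      simp only [hg]
      ring
    rw [← hz]
    exact real_inner_self_nonneg
  -- combine
  rw [hLHS, hRHS]
  calc ∑ u, ∑ v, t u v ≤ (∑ u, ∑ v, t u v) + ∑ u, ∑ v, g u v :=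
        le_add_of_nonneg_right hGram
    _ = ∑ u, ∑ v, (t u v + g u v) := by
        rw [← Finset.sum_add_distrib]
        exact Finset.sum_congr rfl fun u _ => by rw [← Finset.sum_add_distrib]
    _ ≤ ∑ u, ∑ v, r u v := by
        rw [symmetrize_sum (fun u v => t u v + g u v), symmetrize_sum r]
        refine Finset.sum_le_sum fun u _ => Finset.sum_le_sum fun v _ => ?_
        have hpsymm : p v u = p u v := real_inner_comm _ _
        have hsq : Real.sqrt (f u * f v) = Real.sqrt (f u) * Real.sqrt (f v) :=
          Real.sqrt_mul (hf u) _
        have hsq' : Real.sqrt (f v * f u) = Real.sqrt (f u) * Real.sqrt (f v) := by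
          rw [mul_comm (f v)]; exact hsq
        have hfu : Real.sqrt (f u) ^ 2 = f u := Real.sq_sqrt (hf u)
        have hfv : Real.sqrt (f v) ^ 2 = f v := Real.sq_sqrt (hf v)
        by_cases hadj : G.Adj u v
        · have hadj' : G.Adj v u := hadj.symm
          have h1 : (1:ℝ) ≤ p u v := hP1 u v hadj
          simp only [ht, hr, hg, ha, if_pos hadj, if_pos hadj', hpsymm, hsq, hsq']
          set A := Real.sqrt (f u)
          set B := Real.sqrt (f v)
          rw [← hfu, ← hfv]
          nlinarith [mul_nonneg (sub_nonneg.mpr h1) (sq_nonneg (B * x u - A * x v))]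
        · have hadj' : ¬ G.Adj v u := fun h => hadj h.symm
          have h0 : (0:ℝ) ≤ p u v := hP0 u v hadj
          simp only [ht, hr, hg, ha, if_neg hadj, if_neg hadj', hpsymm, zero_add]
          set A := Real.sqrt (f u)
          set B := Real.sqrt (f v)
          rw [← hfu, ← hfv]
          nlinarith [mul_nonneg h0 (sq_nonneg (B * x u - A * x v))]

end Aux

/-- Let `P : V → ℝ^ℓ` be a vector representation of `G` (`⟪P u, P v⟫ ≥ 1`
on edges, `≥ 0` on non-edges) and `f : V → ℝ≥0`. Let `T` be the diagonal matrix with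
`T u u = ⟪P u, ∑_v f v • P v⟫`, and `𝓛^f(G)` the symmetric weighted Laplacian. If
`μ` and `ν` are nonincreasing enumerations of the eigenvalues (with multiplicity) of `T`
and `𝓛^f(G)` respectively, then `μ i ≥ ν i` for every `i`: the `i`-th largest eigenvalue
of `T` is at least the `i`-th largest eigenvalue of `𝓛^f(G)`. -/
theorem diag_dominates_symWLap {n ℓ : ℕ} (G : SimpleGraph (Fin n)) [DecidableRel G.Adj]
    (P : Fin n → EuclideanSpace ℝ (Fin ℓ))
    (hP1 : ∀ u v, G.Adj u v → (1:ℝ) ≤ (inner ℝ (P u) (P v) : ℝ))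
    (hP0 : ∀ u v, ¬ G.Adj u v → (0 : ℝ) ≤ (inner ℝ (P u) (P v) : ℝ))
    (f : Fin n → ℝ) (hf : ∀ v, 0 ≤ f v)
    (T : Matrix (Fin n) (Fin n) ℝ)
    (hT : T = Matrix.diagonal fun u => (inner ℝ (P u) (∑ v : Fin n, f v • P v) : ℝ))
    (μ ν : Fin n → ℝ) (hμ : Antitone μ) (hν : Antitone ν)
    (hcT : T.charpoly = ∏ i, (X - C (μ i)))
    (hcL : (G.symWLap f).charpoly = ∏ i, (X - C (ν i))) :
    ∀ i : Fin n, ν i ≤ μ i := by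
  classical
  have hermL : (G.symWLap f).IsHermitian := by
    refine Matrix.IsHermitian.ext fun i j => ?_
    simp only [star_trivial, SimpleGraph.symWLap, Matrix.of_apply]
    by_cases hij : i = j
    · subst hij; simp
    · have hji : ¬ j = i := fun h => hij h.symm
      rw [if_neg hij, if_neg hji]
      by_cases hadj : G.Adj i j
      · rw [if_pos hadj, if_pos hadj.symm, mul_comm]
      · rw [if_neg hadj, if_neg fun h => hadj h.symm]
  have hermT : T.IsHermitian := by
    rw [hT]; exact Matrix.isHermitian_diagonal _
  have hmB : Multiset.map μ Finset.univ.val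
      = Multiset.map hermT.eigenvalues Finset.univ.val :=
    multiset_eq_of_prod_eq _ _
      (hcT.symm.trans (charpoly_eq_prod_eigenvalues T hermT))
  have hmA : Multiset.map ν Finset.univ.val
      = Multiset.map hermL.eigenvalues Finset.univ.val :=
    multiset_eq_of_prod_eq _ _
      (hcL.symm.trans (charpoly_eq_prod_eigenvalues _ hermL))
  have hq : ∀ x : Fin n → ℝ, x ⬝ᵥ (G.symWLap f *ᵥ x) ≤ x ⬝ᵥ (T *ᵥ x) := by
    intro x
    rw [hT]
    exact quad_ineq G P hP1 hP0 f hf x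
  exact eig_mono hermL hermT hq μ ν hμ hν hmB hmA
end

section
/- Let $G=(V,E)$ be a finite graph, $f:V\to\mathbb{R}_{\ge0}$, and $P:V\to\mathbb{R}^\ell$ a vector representation of $G$ (i.e., $P(u)\cdot P(v)\ge1$ for $\{u,v\}\in E$ and $P(u)\cdot P(v)\ge0$ for $\{u,v\}\notin E$, $u\neq v$). Then for every $x\in\mathbb{R}^V$: $\sum_{\{u,v\}\in E}\big(\sqrt{f(v)}x_u-\sqrt{f(u)}x_v\big)^2 \le \sum_{u\in V}\Big(P(u)\cdot\sum_{v\neq u}f(v)P(v)\Big)x_u^2-\sum_{u\neq v}\sqrt{f(u)f(v)}\,(P(u)\cdot P(v))\,x_u x_v$. Equivalently, the matrix $M-\mathcal{L}^f(G)$ is positive semidefinite, where $M_{u,u}=P(u)\cdot\sum_{u'\neq u}f(u')P(u')$ and $M_{u,v}=-\sqrt{f(u)f(v)}P(u)\cdot P(v)$ for $u\neq v$. -/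
open Matrix

section Aux

open Finset

private lemma sum_dart_eq_two_mul_sum_edges {V : Type*} [Fintype V] [DecidableEq V]
    (G : SimpleGraph V) [DecidableRel G.Adj] (Q : Sym2 V → ℝ) :
    ∑ d : G.Dart, Q d.edge = 2 * ∑ e ∈ G.edgeFinset, Q e := by
  rw [← Finset.sum_fiberwise_of_maps_to'
      (fun d _ => by simp : ∀ d : G.Dart, d ∈ univ → d.edge ∈ G.edgeFinset) Q,
    Finset.mul_sum]
  refine Finset.sum_congr rfl fun e he => ?_
  have hcard : #({d : G.Dart | d.edge = e} : Finset _) = 2 :=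
    G.dart_edge_fiber_card e (by simpa using he)
  rw [Finset.sum_const, show (Finset.univ.filter (fun d : G.Dart => d.edge = e))
      = ({d : G.Dart | d.edge = e} : Finset _) from rfl, hcard]
  simp [nsmul_eq_mul]

private lemma sum_dart_eq_pairs {V : Type*} [Fintype V] [DecidableEq V]
    (G : SimpleGraph V) [DecidableRel G.Adj] (q : V → V → ℝ) :
    ∑ d : G.Dart, q d.fst d.snd = ∑ u, ∑ v, if G.Adj u v then q u v else 0 := by
  have h2 : ∑ u, ∑ v, (if G.Adj u v then q u v else 0)
      = ∑ p ∈ (Finset.univ ×ˢ Finset.univ).filter (fun p : V × V => G.Adj p.1 p.2), q p.1 p.2 := by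
    rw [Finset.sum_filter, Finset.sum_product]
  rw [h2]
  exact Finset.sum_bij' (fun (d : G.Dart) _ => (d.fst, d.snd))
    (fun p hp => SimpleGraph.Dart.mk p ((Finset.mem_filter.1 hp).2))
    (by simp) (by simp) (by simp) (by simp) (by simp)

private lemma edge_sum_eq {V : Type*} [Fintype V] [DecidableEq V]
    (G : SimpleGraph V) [DecidableRel G.Adj] (q : V → V → ℝ)
    (hq : ∀ u v, q u v = q v u) :
    2 * ∑ e ∈ G.edgeFinset, Sym2.lift ⟨q, hq⟩ e
      = ∑ u, ∑ v, if G.Adj u v then q u v else 0 := by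
  rw [← sum_dart_eq_two_mul_sum_edges, ← sum_dart_eq_pairs]
  refine Finset.sum_congr rfl fun d _ => ?_
  have : d.edge = s(d.fst, d.snd) := by simp [SimpleGraph.Dart.edge]
  rw [this, Sym2.lift_mk]

private lemma keyId {V : Type*} [Fintype V] (h : V → V → ℝ) (hh : ∀ u v, h u v = h v u)
    (f g : V → ℝ) (hg : ∀ u, g u * g u = f u) (x : V → ℝ) :
    ∑ u, ∑ v, h u v * (g v * x u - g u * x v) ^ 2
      = 2 * ∑ u, ∑ v, h u v * (f v * x u ^ 2 - g u * g v * (x u * x v)) := by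
  set A : V → V → ℝ := fun a b => h a b * (f b * x a ^ 2 - g a * g b * (x a * x b)) with hA
  have point : ∀ u v, h u v * (g v * x u - g u * x v) ^ 2 = A u v + A v u := by
    intro u v
    simp only [hA]
    rw [hh v u, ← hg u, ← hg v]
    ring
  calc ∑ u, ∑ v, h u v * (g v * x u - g u * x v) ^ 2
      = ∑ u, ∑ v, (A u v + A v u) :=
        Finset.sum_congr rfl fun u _ => Finset.sum_congr rfl fun v _ => point u v
    _ = (∑ u, ∑ v, A u v) + ∑ u, ∑ v, A v u := by simp [Finset.sum_add_distrib]
    _ = (∑ u, ∑ v, A u v) + ∑ v, ∑ u, A v u := by rw [Finset.sum_comm]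
    _ = 2 * ∑ u, ∑ v, A u v := by ring

end Aux

/-- Let `P : V → ℝ^ℓ` be a vector representation of `G` and `f : V → ℝ≥0`.
Then for every `x : V → ℝ`,
`∑_{{u,v} ∈ E} (√(f v)·x_u − √(f u)·x_v)² ≤
  ∑_u ⟪P u, ∑_{v ≠ u} f v • P v⟫ x_u² − ∑_{u ≠ v} √(f u)√(f v) ⟪P u, P v⟫ x_u x_v`;
equivalently, `M − 𝓛^f(G)` is positive semidefinite, where `M u u = ⟪P u, ∑_{u' ≠ u} f u' • P u'⟫`
and `M u v = −√(f u)√(f v) ⟪P u, P v⟫` for `u ≠ v`. -/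
theorem quadform_vector_representation {n ℓ : ℕ} (G : SimpleGraph (Fin n))
    [DecidableRel G.Adj]
    (P : Fin n → EuclideanSpace ℝ (Fin ℓ))
    (hP1 : ∀ u v, G.Adj u v → (1 : ℝ) ≤ inner ℝ (P u) (P v))
    (hP0 : ∀ u v, u ≠ v → ¬ G.Adj u v → (0 : ℝ) ≤ (inner ℝ (P u) (P v) : ℝ))
    (f : Fin n → ℝ) (hf : ∀ v, 0 ≤ f v)
    (M : Matrix (Fin n) (Fin n) ℝ)
    (hM : M = Matrix.of fun u v =>
      if u = v then (inner ℝ (P u) (∑ u' ∈ Finset.univ.erase u, f u' • P u') : ℝ)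
      else -(Real.sqrt (f u) * Real.sqrt (f v) * (inner ℝ (P u) (P v) : ℝ))) :
    (∀ x : Fin n → ℝ,
      ∑ e ∈ G.edgeFinset,
        Sym2.lift ⟨fun u v => (Real.sqrt (f v) * x u - Real.sqrt (f u) * x v) ^ 2,
          fun u v => by ring⟩ e ≤
        (∑ u : Fin n, (inner ℝ (P u) (∑ v ∈ Finset.univ.erase u, f v • P v) : ℝ) * x u ^ 2) -
          ∑ u : Fin n, ∑ v ∈ Finset.univ.erase u,
            Real.sqrt (f u) * Real.sqrt (f v) * (inner ℝ (P u) (P v) : ℝ) * x u * x v) ∧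
    (M - G.symWLap f).PosSemidef := by
  have hg : ∀ u, Real.sqrt (f u) * Real.sqrt (f u) = f u := fun u => Real.mul_self_sqrt (hf u)
  have hindsym : ∀ u v : Fin n, (if G.Adj u v then (1:ℝ) else 0) = (if G.Adj v u then (1:ℝ) else 0) := by
    intro u v; by_cases hadj : G.Adj u v
    · rw [if_pos hadj, if_pos hadj.symm]
    · rw [if_neg hadj, if_neg (fun H => hadj H.symm)]
  have hfunsym : ∀ u v : Fin n,
      ((inner ℝ (P u) (P v) : ℝ) - (if G.Adj u v then (1:ℝ) else 0))
        = ((inner ℝ (P v) (P u) : ℝ) - (if G.Adj v u then (1:ℝ) else 0)) := by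
    intro u v; rw [real_inner_comm, hindsym]
  have hinner : ∀ u : Fin n, (inner ℝ (P u) (∑ v ∈ Finset.univ.erase u, f v • P v) : ℝ)
      = ∑ v ∈ Finset.univ.erase u, f v * (inner ℝ (P u) (P v) : ℝ) := by
    intro u
    rw [inner_sum]
    exact Finset.sum_congr rfl fun v _ => real_inner_smul_right _ _ _
  have extend : ∀ (u : Fin n) (F : Fin n → ℝ), F u = 0 →
      ∑ v ∈ Finset.univ.erase u, F v = ∑ v : Fin n, F v := by
    intro u F hF
    exact Finset.sum_erase _ hF
  -- nonnegativity of the central quantity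
  have RHnonneg : ∀ x : Fin n → ℝ,
      0 ≤ ∑ u : Fin n, ∑ v : Fin n,
        ((inner ℝ (P u) (P v) : ℝ) - (if G.Adj u v then (1:ℝ) else 0)) *
          (f v * x u ^ 2 - Real.sqrt (f u) * Real.sqrt (f v) * (x u * x v)) := by
    intro x
    have e := keyId (fun u v => (inner ℝ (P u) (P v) : ℝ) - (if G.Adj u v then (1:ℝ) else 0))
      hfunsym f (fun u => Real.sqrt (f u)) hg x
    have S_nonneg : 0 ≤ ∑ u : Fin n, ∑ v : Fin n,
        ((inner ℝ (P u) (P v) : ℝ) - (if G.Adj u v then (1:ℝ) else 0)) *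
          (Real.sqrt (f v) * x u - Real.sqrt (f u) * x v) ^ 2 := by
      refine Finset.sum_nonneg fun u _ => Finset.sum_nonneg fun v _ => ?_
      by_cases huv : u = v
      · subst huv; simp
      · refine mul_nonneg ?_ (sq_nonneg _)
        by_cases hadj : G.Adj u v
        · rw [if_pos hadj]; linarith [hP1 u v hadj]
        · rw [if_neg hadj]; simpa using hP0 u v huv hadj
    beta_reduce at e
    linarith
  -- the RHS of the first statement
  have hAx : ∀ x : Fin n → ℝ,
      (∑ u : Fin n, (inner ℝ (P u) (∑ v ∈ Finset.univ.erase u, f v • P v) : ℝ) * x u ^ 2) -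
          ∑ u : Fin n, ∑ v ∈ Finset.univ.erase u,
            Real.sqrt (f u) * Real.sqrt (f v) * (inner ℝ (P u) (P v) : ℝ) * x u * x v
      = ∑ u : Fin n, ∑ v : Fin n, (inner ℝ (P u) (P v) : ℝ) *
          (f v * x u ^ 2 - Real.sqrt (f u) * Real.sqrt (f v) * (x u * x v)) := by
    intro x
    rw [← Finset.sum_sub_distrib]
    refine Finset.sum_congr rfl fun u _ => ?_
    have hdiag : (inner ℝ (P u) (P u) : ℝ) *
        (f u * x u ^ 2 - Real.sqrt (f u) * Real.sqrt (f u) * (x u * x u)) = 0 := by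
      rw [hg u]; ring
    rw [← extend u (fun v => (inner ℝ (P u) (P v) : ℝ) *
          (f v * x u ^ 2 - Real.sqrt (f u) * Real.sqrt (f v) * (x u * x v))) hdiag]
    rw [hinner u, Finset.sum_mul, ← Finset.sum_sub_distrib]
    exact Finset.sum_congr rfl fun v _ => by ring
  -- the edge sum
  have hLx : ∀ x : Fin n → ℝ,
      (∑ e ∈ G.edgeFinset,
        Sym2.lift ⟨fun u v => (Real.sqrt (f v) * x u - Real.sqrt (f u) * x v) ^ 2,
          fun u v => by ring⟩ e)
      = ∑ u : Fin n, ∑ v : Fin n, (if G.Adj u v then (1:ℝ) else 0) *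
          (f v * x u ^ 2 - Real.sqrt (f u) * Real.sqrt (f v) * (x u * x v)) := by
    intro x
    have e1 := edge_sum_eq G (fun u v => (Real.sqrt (f v) * x u - Real.sqrt (f u) * x v) ^ 2)
      (fun u v => by ring)
    have e2 := keyId (fun u v => if G.Adj u v then (1:ℝ) else 0) hindsym f
      (fun u => Real.sqrt (f u)) hg x
    have e3 : ∑ u : Fin n, ∑ v : Fin n,
        (if G.Adj u v then ((Real.sqrt (f v) * x u - Real.sqrt (f u) * x v) ^ 2) else 0)
        = ∑ u : Fin n, ∑ v : Fin n, (if G.Adj u v then (1:ℝ) else 0) *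
            (Real.sqrt (f v) * x u - Real.sqrt (f u) * x v) ^ 2 := by
      refine Finset.sum_congr rfl fun u _ => Finset.sum_congr rfl fun v _ => ?_
      by_cases hadj : G.Adj u v <;> simp [hadj]
    beta_reduce at e1 e2 e3
    linarith
  -- split lemma
  have hsplit : ∀ x : Fin n → ℝ,
      (∑ u : Fin n, ∑ v : Fin n,
        ((inner ℝ (P u) (P v) : ℝ) - (if G.Adj u v then (1:ℝ) else 0)) *
          (f v * x u ^ 2 - Real.sqrt (f u) * Real.sqrt (f v) * (x u * x v)))
      = (∑ u : Fin n, ∑ v : Fin n, (inner ℝ (P u) (P v) : ℝ) *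
          (f v * x u ^ 2 - Real.sqrt (f u) * Real.sqrt (f v) * (x u * x v)))
        - ∑ u : Fin n, ∑ v : Fin n, (if G.Adj u v then (1:ℝ) else 0) *
          (f v * x u ^ 2 - Real.sqrt (f u) * Real.sqrt (f v) * (x u * x v)) := by
    intro x
    rw [← Finset.sum_sub_distrib]
    refine Finset.sum_congr rfl fun u _ => ?_
    rw [← Finset.sum_sub_distrib]
    exact Finset.sum_congr rfl fun v _ => by ring
  constructor
  · intro x
    have h1 := RHnonneg x
    rw [hsplit x] at h1
    rw [hAx x]
    have h2 := hLx x
    -- goal : edge sum ≤ big sum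
    rw [h2]
    linarith
  · -- Positive semidefiniteness
    have hN : ∀ u : Fin n, ∑ v' ∈ G.neighborFinset u, f v'
        = ∑ v ∈ Finset.univ.erase u, (if G.Adj u v then (1:ℝ) else 0) * f v := by
      intro u
      rw [extend u (fun v => (if G.Adj u v then (1:ℝ) else 0) * f v) (by simp)]
      rw [SimpleGraph.neighborFinset_eq_filter, Finset.sum_filter]
      refine Finset.sum_congr rfl fun v _ => ?_
      by_cases hadj : G.Adj u v <;> simp [hadj]
    have hdiagentry : ∀ u : Fin n, (M - G.symWLap f) u u
        = ∑ v ∈ Finset.univ.erase u,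
            ((inner ℝ (P u) (P v) : ℝ) - (if G.Adj u v then (1:ℝ) else 0)) * f v := by
      intro u
      simp only [Matrix.sub_apply, hM, Matrix.of_apply, SimpleGraph.symWLap,
        eq_self_iff_true, if_true]
      rw [hinner u, hN u, ← Finset.sum_sub_distrib]
      exact Finset.sum_congr rfl fun v _ => by ring
    have hoff : ∀ u v : Fin n, v ≠ u → (M - G.symWLap f) u v
        = -(((inner ℝ (P u) (P v) : ℝ) - (if G.Adj u v then (1:ℝ) else 0)) *
            (Real.sqrt (f u) * Real.sqrt (f v))) := by
      intro u v hvu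
      have huv : ¬ (u = v) := fun h => hvu h.symm
      simp only [Matrix.sub_apply, hM, Matrix.of_apply, SimpleGraph.symWLap, if_neg huv]
      by_cases hadj : G.Adj u v
      · rw [if_pos hadj, if_pos hadj, Real.sqrt_mul (hf u)]
        ring
      · rw [if_neg hadj, if_neg hadj]
        ring
    rw [Matrix.posSemidef_iff_dotProduct_mulVec]
    constructor
    · -- Hermitian
      ext i j
      rw [Matrix.conjTranspose_apply, star_trivial]
      by_cases hij : i = j
      · subst hij; rfl
      · rw [hoff j i hij, hoff i j (fun h => hij h.symm), hfunsym i j]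
        ring
    · intro x
      have hxs : star x = x := by simp
      rw [hxs]
      have expand : x ⬝ᵥ ((M - G.symWLap f) *ᵥ x)
          = ∑ u : Fin n, ∑ v : Fin n, x u * ((M - G.symWLap f) u v * x v) := by
        simp [dotProduct, Matrix.mulVec, Finset.mul_sum]
      have hu : ∀ u : Fin n, ∑ v : Fin n, x u * ((M - G.symWLap f) u v * x v)
          = ∑ v ∈ Finset.univ.erase u,
              ((inner ℝ (P u) (P v) : ℝ) - (if G.Adj u v then (1:ℝ) else 0)) *
                (f v * x u ^ 2 - Real.sqrt (f u) * Real.sqrt (f v) * (x u * x v)) := by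
        intro u
        rw [← Finset.add_sum_erase _ (fun v => x u * ((M - G.symWLap f) u v * x v))
          (Finset.mem_univ u)]
        rw [hdiagentry u]
        have off : ∑ v ∈ Finset.univ.erase u, x u * ((M - G.symWLap f) u v * x v)
            = ∑ v ∈ Finset.univ.erase u,
                x u * (-(((inner ℝ (P u) (P v) : ℝ) - (if G.Adj u v then (1:ℝ) else 0)) *
                  (Real.sqrt (f u) * Real.sqrt (f v))) * x v) :=
          Finset.sum_congr rfl fun v hv => by rw [hoff u v (Finset.ne_of_mem_erase hv)]
        rw [off]
        have diag : x u * ((∑ v ∈ Finset.univ.erase u,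
            ((inner ℝ (P u) (P v) : ℝ) - (if G.Adj u v then (1:ℝ) else 0)) * f v) * x u)
            = ∑ v ∈ Finset.univ.erase u,
              ((inner ℝ (P u) (P v) : ℝ) - (if G.Adj u v then (1:ℝ) else 0)) * f v * x u ^ 2 := by
          rw [Finset.sum_mul, Finset.mul_sum]
          exact Finset.sum_congr rfl fun v _ => by ring
        rw [diag, ← Finset.sum_add_distrib]
        exact Finset.sum_congr rfl fun v _ => by ring
      have total : x ⬝ᵥ ((M - G.symWLap f) *ᵥ x)
          = ∑ u : Fin n, ∑ v : Fin n,
              ((inner ℝ (P u) (P v) : ℝ) - (if G.Adj u v then (1:ℝ) else 0)) *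
                (f v * x u ^ 2 - Real.sqrt (f u) * Real.sqrt (f v) * (x u * x v)) := by
        rw [expand]
        refine Finset.sum_congr rfl fun u _ => ?_
        rw [hu u]
        refine extend u _ ?_
        have hz : f u * x u ^ 2 - Real.sqrt (f u) * Real.sqrt (f u) * (x u * x u) = 0 := by
          rw [hg u]; ring
        rw [hz, mul_zero]
      rw [total]
      exact RHnonneg x
end
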